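/- Let αᵢ, αⱼ, αₖ ∈ (0, π/2]. Then the quantity F = (cos αᵢ + cos αⱼ·cos αₖ)/(sin αⱼ·sin αₖ) satisfies F ≥ 0; moreover F < 1 if and only if αᵢ + αⱼ + αₖ > π. In particular, when the three dihedral angles at a trivalent vertex are non-obtuse and sum to more than π, each face angle β = arccos(F) at that vertex is well defined and satisfies 0 < β ≤ π/2. -/

import Mathlib

open Real

theorem face_angle_well_defined (αi αj αk : ℝ)
    (hi : αi ∈ Set.Ioc 0 (π / 2)) (hj : αj ∈ Set.Ioc 0 (π / 2))
    (hk : αk ∈ Set.Ioc 0 (π / 2)) :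
    0 ≤ (Real.cos αi + Real.cos αj * Real.cos αk) / (Real.sin αj * Real.sin αk) ∧
    ((Real.cos αi + Real.cos αj * Real.cos αk) / (Real.sin αj * Real.sin αk) < 1
      ↔ π < αi + αj + αk) ∧
    (π < αi + αj + αk →
      0 < Real.arccos
          ((Real.cos αi + Real.cos αj * Real.cos αk) / (Real.sin αj * Real.sin αk)) ∧
      Real.arccos
          ((Real.cos αi + Real.cos αj * Real.cos αk) / (Real.sin αj * Real.sin αk))
        ≤ π / 2) := by
  obtain ⟨hi0, hi2⟩ := hi
  obtain ⟨hj0, hj2⟩ := hj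
  obtain ⟨hk0, hk2⟩ := hk
  have hpi := Real.pi_pos
  have hsj : 0 < Real.sin αj := Real.sin_pos_of_pos_of_lt_pi hj0 (by linarith)
  have hsk : 0 < Real.sin αk := Real.sin_pos_of_pos_of_lt_pi hk0 (by linarith)
  have hci : 0 ≤ Real.cos αi := Real.cos_nonneg_of_mem_Icc ⟨by linarith, hi2⟩
  have hcj : 0 ≤ Real.cos αj := Real.cos_nonneg_of_mem_Icc ⟨by linarith, hj2⟩
  have hck : 0 ≤ Real.cos αk := Real.cos_nonneg_of_mem_Icc ⟨by linarith, hk2⟩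
  have hden : 0 < Real.sin αj * Real.sin αk := mul_pos hsj hsk
  have hF0 : 0 ≤ (Real.cos αi + Real.cos αj * Real.cos αk) / (Real.sin αj * Real.sin αk) :=
    div_nonneg (by positivity) hden.le
  have hiff : (Real.cos αi + Real.cos αj * Real.cos αk) / (Real.sin αj * Real.sin αk) < 1
      ↔ π < αi + αj + αk := by
    rw [div_lt_one hden]
    have key : Real.cos αi < Real.sin αj * Real.sin αk - Real.cos αj * Real.cos αk
        ↔ π < αi + αj + αk := by
      have h1 : Real.sin αj * Real.sin αk - Real.cos αj * Real.cos αk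
          = Real.cos (π - (αj + αk)) := by
        rw [Real.cos_pi_sub, Real.cos_add]; ring
      rw [h1]
      have hmem1 : αi ∈ Set.Icc 0 π := ⟨hi0.le, by linarith⟩
      have hmem2 : π - (αj + αk) ∈ Set.Icc 0 π := ⟨by linarith, by linarith⟩
      rw [Real.strictAntiOn_cos.lt_iff_gt hmem1 hmem2]
      constructor <;> intro h <;> linarith
    constructor <;> intro h
    · exact key.mp (by linarith)
    · have := key.mpr h; linarith
  refine ⟨hF0, hiff, fun h => ?_⟩
  refine ⟨Real.arccos_pos.mpr (hiff.mpr h), ?_⟩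
  rw [Real.arccos_le_pi_div_two]
  exact hF0
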